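/- arXiv:0804.3131 — 5 statements merged into one kernel-verified Lean document; each statement's English description precedes it below -/
import Mathlib

section
/- Let d ≥ 1 and e_1,...,e_d be reals. The (d+1)×(d+1) matrix whose i-th row is obtained from the row (e_1, e_2, ..., e_d) by inserting a 0 in the i-th position (so row i has entries e_1,...,e_{i-1}, 0, e_i,...,e_d) has determinant (-1)^d · (e_1+e_2+...+e_d) · (e_1·e_2·...·e_d). -/
open Matrix Finset in
theorem det_insert_zero_matrix (d : ℕ) (hd : 1 ≤ d) (e : ℕ → ℝ) :
    Matrix.det (Matrix.of fun i j : Fin (d + 1) =>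
        if (j : ℕ) = (i : ℕ) then (0 : ℝ)
        else if (j : ℕ) < (i : ℕ) then e (j : ℕ)
        else e ((j : ℕ) - 1)) =
      (-1) ^ d * (∑ i ∈ Finset.range d, e i) * ∏ i ∈ Finset.range d, e i := by
  set M : Matrix (Fin (d+1)) (Fin (d+1)) ℝ := Matrix.of fun i j : Fin (d + 1) =>
        if (j : ℕ) = (i : ℕ) then (0 : ℝ)
        else if (j : ℕ) < (i : ℕ) then e (j : ℕ)
        else e ((j : ℕ) - 1) with hM
  set U : Matrix (Fin (d+1)) (Fin (d+1)) ℝ := Matrix.of fun i k : Fin (d + 1) =>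
        (if k = i then (1:ℝ) else 0) - (if (k:ℕ) = (i:ℕ)+1 then 1 else 0) with hU
  set V : Matrix (Fin (d+1)) (Fin (d+1)) ℝ := Matrix.of fun l j : Fin (d + 1) =>
        if (l:ℕ) ≤ (j:ℕ) then (1:ℝ) else 0 with hV
  have hUdet : U.det = 1 := by
    rw [Matrix.det_of_upperTriangular]
    · simp only [hU, Matrix.of_apply, if_pos rfl]
      have : ∀ i : Fin (d+1), ((1:ℝ) - if (i:ℕ) = (i:ℕ)+1 then 1 else 0) = 1 := by
        intro i; rw [if_neg (by omega)]; ring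
      simp [this]
    · intro i j hij
      have hij' : (j:ℕ) < (i:ℕ) := hij
      simp only [hU, Matrix.of_apply]
      rw [if_neg (by rintro rfl; omega), if_neg (by omega)]
      ring
  have hVdet : V.det = 1 := by
    rw [Matrix.det_of_upperTriangular]
    · simp [hV]
    · intro i j hij
      have hij' : (j:ℕ) < (i:ℕ) := hij
      simp only [hV, Matrix.of_apply]
      rw [if_neg (by omega)]
  have hUM : ∀ (i l : Fin (d+1)), (i:ℕ) < d →
      (U * M) i l = e i * ((if (l:ℕ) = (i:ℕ)+1 then 1 else 0) - (if l = i then 1 else 0)) := by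
    intro i l hi
    have hi1 : (i:ℕ)+1 < d+1 := by omega
    have hrow : ∀ k : Fin (d+1), U i k
        = (if k = i then (1:ℝ) else 0) - (if k = ⟨(i:ℕ)+1, hi1⟩ then 1 else 0) := by
      intro k
      simp only [hU, Matrix.of_apply]
      congr 2
      simp [Fin.ext_iff]
    simp only [Matrix.mul_apply, hrow, sub_mul, one_mul, zero_mul, ite_mul,
      Finset.sum_sub_distrib, Finset.sum_ite_eq', Finset.mem_univ, if_true]
    simp only [hM, Matrix.of_apply, Fin.ext_iff, Fin.val_mk]
    split_ifs <;>
      first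
        | ring1
        | (exfalso; omega)
        | (rw [show (l:ℕ) - 1 = (i:ℕ) from by omega]; try ring1)
        | (rw [show (l:ℕ) = (i:ℕ) from by omega]; try ring1)
  have hA : ∀ (i j : Fin (d+1)), (i:ℕ) < d →
      (U * M * V) i j = e i * ((if (i:ℕ)+1 ≤ (j:ℕ) then 1 else 0)
        - (if (i:ℕ) ≤ (j:ℕ) then 1 else 0)) := by
    intro i j hi
    have hi1 : (i:ℕ)+1 < d+1 := by omega
    rw [Matrix.mul_apply]
    have key : ∀ l : Fin (d+1), (U * M) i l * V l j
        = e i * ((if l = ⟨(i:ℕ)+1, hi1⟩ then V l j else 0) - (if l = i then V l j else 0)) := by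
      intro l
      rw [hUM i l hi]
      simp only [Fin.ext_iff, Fin.val_mk]
      split_ifs <;> ring
    simp only [key]
    rw [← Finset.mul_sum, Finset.sum_sub_distrib, Finset.sum_ite_eq', Finset.sum_ite_eq']
    simp only [Finset.mem_univ, if_true, hV, Matrix.of_apply, Fin.val_mk]
  have hAlast : (U * M * V) (Fin.last d) (Fin.last d) = ∑ i ∈ Finset.range d, e i := by
    have hrow : ∀ k : Fin (d+1), U (Fin.last d) k = if k = Fin.last d then (1:ℝ) else 0 := by
      intro k
      have hk := k.isLt
      simp only [hU, Matrix.of_apply, Fin.val_last]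
      rw [if_neg (show ¬(k:ℕ) = d + 1 by omega), sub_zero]
    rw [Matrix.mul_apply]
    have hterm : ∀ l : Fin (d+1), (U * M) (Fin.last d) l * V l (Fin.last d)
        = M (Fin.last d) l := by
      intro l
      rw [Matrix.mul_apply]
      simp only [hrow, ite_mul, one_mul, zero_mul, Finset.sum_ite_eq', Finset.mem_univ, if_true]
      have : V l (Fin.last d) = 1 := by
        simp only [hV, Matrix.of_apply, Fin.val_last]
        rw [if_pos (by have := l.isLt; omega)]
      rw [this, mul_one]
    simp only [hterm]
    rw [Fin.sum_univ_castSucc]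
    have h1 : ∀ i : Fin d, M (Fin.last d) i.castSucc = e i := by
      intro i
      simp only [hM, Matrix.of_apply, Fin.coe_castSucc, Fin.val_last]
      rw [if_neg (by have := i.isLt; omega), if_pos i.isLt]
    have h2 : M (Fin.last d) (Fin.last d) = 0 := by
      simp [hM, Matrix.of_apply]
    simp only [h1, h2, add_zero]
    exact Fin.sum_univ_eq_sum_range (fun i => e i) d
  have hdet : M.det = (U * M * V).det := by
    rw [Matrix.det_mul, Matrix.det_mul, hUdet, hVdet]; ring
  rw [hdet, Matrix.det_of_lowerTriangular]
  · rw [Fin.prod_univ_castSucc, hAlast]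
    have hdiag : ∀ i : Fin d, (U * M * V) i.castSucc i.castSucc = -e i := by
      intro i
      rw [hA _ _ (by simpa using i.isLt)]
      simp only [Fin.coe_castSucc]
      rw [if_neg (by omega), if_pos (le_refl _)]
      ring
    rw [Finset.prod_congr rfl (fun i _ => hdiag i)]
    have : ∏ i : Fin d, -e (i:ℕ) = (-1)^d * ∏ i ∈ Finset.range d, e i := by
      rw [show (fun i : Fin d => -e (i:ℕ)) = (fun i : Fin d => (-1) * e (i:ℕ)) from by
          funext i; ring]
      rw [Finset.prod_mul_distrib, Finset.prod_const]
      simp [Fin.prod_univ_eq_prod_range (fun i => e i) d]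
    rw [this]
    ring
  · intro i j hij
    have hij' : (i:ℕ) < (j:ℕ) := hij
    have hi : (i:ℕ) < d := by have := j.isLt; omega
    rw [hA i j hi, if_pos (by omega), if_pos (by omega)]
    ring
end

section
/- Call a finite set of k disjoint pairs (p_1,q_1), ..., (p_k,q_k) of natural numbers with p_1 < q_1 < p_2 < q_2 < ... < p_k < q_k 'd-dispersed' if p_{j+1} ≥ q_j + d for all 1 ≤ j ≤ k-1. Then any collection of k disjoint ordered pairs n_1 < n_2 < ... < n_{2k-1} < n_{2k} (pairs (n_{2i-1}, n_{2i})) can be partitioned into at most ⌊d/2⌋ + 2 subcollections, each of which is d-dispersed. -/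
/-- Sublemma 14: any ordered collection of `k` disjoint pairs
`p 0 < q 0 < p 1 < q 1 < ...` can be partitioned into at most `⌊d/2⌋ + 2`
`d`-dispersed subcollections. -/
theorem sublemma14 (d k : ℕ) (p q : Fin k → ℕ)
    (hpq : ∀ i, p i < q i) (hord : ∀ i j : Fin k, i < j → q i < p j) :
    ∃ f : Fin k → Fin (d / 2 + 2), ∀ i j : Fin k, f i = f j → i < j → q i + d ≤ p j := by
  set m := d / 2 + 2 with hm
  have hmpos : 0 < m := by omega
  -- growth lemma
  have grow : ∀ n : ℕ, ∀ i j : Fin k, (i : ℕ) + n = (j : ℕ) → q i + 2 * n ≤ q j := by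
    intro n
    induction n with
    | zero =>
      intro i j h
      have : i = j := Fin.ext (by omega)
      subst this; omega
    | succ n ih =>
      intro i j h
      have hmidlt : (i : ℕ) + n < k := by have := j.isLt; omega
      set mid : Fin k := ⟨(i : ℕ) + n, hmidlt⟩ with hmid
      have h1 : q i + 2 * n ≤ q mid := ih i mid rfl
      have h2 : mid < j := by
        rw [Fin.lt_def]; simp [hmid]; omega
      have h3 : q mid < p j := hord mid j h2
      have h4 : p j < q j := hpq j
      omega
  refine ⟨fun i => ⟨(i : ℕ) % m, Nat.mod_lt _ hmpos⟩, ?_⟩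
  intro i j hf hij
  have hmod : (i : ℕ) % m = (j : ℕ) % m := by
    have := congrArg Fin.val hf; simpa using this
  have hle : (i : ℕ) ≤ (j : ℕ) := le_of_lt hij
  have hdvd : m ∣ (j : ℕ) - (i : ℕ) := (Nat.modEq_iff_dvd' hle).mp hmod
  have hgap : m ≤ (j : ℕ) - (i : ℕ) := Nat.le_of_dvd (by omega) hdvd
  have hjpos : 0 < (j : ℕ) := by omega
  have hmidlt : (j : ℕ) - 1 < k := by have := j.isLt; omega
  set mid : Fin k := ⟨(j : ℕ) - 1, hmidlt⟩ with hmid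
  have h1 : q i + 2 * ((j : ℕ) - 1 - (i : ℕ)) ≤ q mid :=
    grow ((j : ℕ) - 1 - (i : ℕ)) i mid (by simp [hmid]; omega)
  have h2 : mid < j := by rw [Fin.lt_def]; simp [hmid]; omega
  have h3 : q mid < p j := hord mid j h2
  have : (i : ℕ) < (j : ℕ) := hij
  omega
end

section
/- Let x : ℕ → ℝ, d ≥ 1, and suppose M ≥ 0 is a real number such that for every finite collection of d-dispersed pairs (p_1 < q_1 < ... < p_s < q_s with p_{j+1} ≥ q_j + d) one has ∑_{j=1}^s (x(q_j) - x(p_j))^2 ≤ M. Then for every finite collection of disjoint pairs n_1 < n_2 < ... < n_{2k-1} < n_{2k}, one has ∑_{i=1}^k (x(n_{2i}) - x(n_{2i-1}))^2 ≤ (⌊d/2⌋ + 2) · M. -/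
lemma fin_strictMono_gap {N : ℕ} (n : Fin N → ℕ) (hn : StrictMono n) :
    ∀ (c : ℕ) (a b : Fin N), (b : ℕ) = (a : ℕ) + c → n a + c ≤ n b := by
  intro c
  induction c with
  | zero =>
    intro a b hb
    have : a = b := Fin.ext (by omega)
    simp [this]
  | succ c ih =>
    intro a b hb
    have hb' : (a : ℕ) + c < N := by have := b.isLt; omega
    have h1 := ih a ⟨(a : ℕ) + c, hb'⟩ rfl
    have h2 : n ⟨(a : ℕ) + c, hb'⟩ < n b := hn (by simp [Fin.lt_def]; omega)
    omega

theorem lemma13_quantitative (d : ℕ) (hd : 1 ≤ d) (x : ℕ → ℝ) (M : ℝ) (hM : 0 ≤ M)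
    (h : ∀ (s : ℕ) (p q : Fin s → ℕ), (∀ j, p j < q j) →
      (∀ i j : Fin s, i < j → q i + d ≤ p j) →
      ∑ j, (x (q j) - x (p j)) ^ 2 ≤ M) :
    ∀ (k : ℕ) (n : Fin (2 * k) → ℕ), StrictMono n →
      ∑ i : Fin k,
        (x (n ⟨2 * (i : ℕ) + 1, by have := i.isLt; omega⟩) -
         x (n ⟨2 * (i : ℕ), by have := i.isLt; omega⟩)) ^ 2 ≤
      ((d / 2 + 2 : ℕ) : ℝ) * M := by
  intro k n hn
  set m : ℕ := d / 2 + 1 with hm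
  have hm0 : 0 < m := by omega
  -- the summand, as a function on ℕ
  set F : ℕ → ℝ := fun i =>
    if hi : i < k then
      (x (n ⟨2 * i + 1, by omega⟩) - x (n ⟨2 * i, by omega⟩)) ^ 2
    else 0 with hF
  have hstep1 : ∑ i : Fin k,
      (x (n ⟨2 * (i : ℕ) + 1, by have := i.isLt; omega⟩) -
       x (n ⟨2 * (i : ℕ), by have := i.isLt; omega⟩)) ^ 2
      = ∑ i ∈ Finset.range k, F i := by
    rw [Finset.sum_range fun i => F i]
    apply Finset.sum_congr rfl
    intro i _
    have hik : (i : ℕ) < k := i.isLt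
    simp [hF, hik]
  rw [hstep1]
  -- fiberwise decomposition mod m
  have hfib : ∑ i ∈ Finset.range k, F i
      = ∑ r ∈ Finset.range m, ∑ i ∈ (Finset.range k).filter (fun i => i % m = r), F i := by
    exact (Finset.sum_fiberwise_of_maps_to
      (fun i _ => Finset.mem_range.mpr (Nat.mod_lt _ hm0)) F).symm
  rw [hfib]
  -- each fiber sums to at most M
  have hfiber : ∀ r ∈ Finset.range m,
      ∑ i ∈ (Finset.range k).filter (fun i => i % m = r), F i ≤ M := by
    intro r hr
    have hrm : r < m := Finset.mem_range.mp hr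
    set s : ℕ := (k - r + m - 1) / m with hs
    have hst : ∀ t : ℕ, t < s ↔ r + m * t < k := by
      intro t
      have h1 : t < s ↔ (t + 1) * m ≤ k - r + m - 1 := by
        constructor
        · intro ht
          exact (Nat.le_div_iff_mul_le hm0).mp ht
        · intro ht
          exact (Nat.le_div_iff_mul_le hm0).mpr ht
      rw [h1, Nat.succ_mul, Nat.mul_comm]
      rcases le_or_gt k r with hk | hk
      · have : k - r = 0 := by omega
        rw [this]
        constructor
        · intro hh; omega
        · intro hh; omega
      · constructor
        · intro hh; omega
        · intro hh; omega
    -- filter equals image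
    have himg : (Finset.range k).filter (fun i => i % m = r)
        = (Finset.range s).image (fun t => r + m * t) := by
      ext i
      simp only [Finset.mem_filter, Finset.mem_range, Finset.mem_image]
      constructor
      · rintro ⟨hik, hir⟩
        refine ⟨i / m, ?_, ?_⟩
        · rw [hst]
          have := Nat.mod_add_div i m
          omega
        · have := Nat.mod_add_div i m
          omega
      · rintro ⟨t, hts, hti⟩
        rw [hst] at hts
        subst hti
        constructor
        · exact hts
        · simp [Nat.add_mul_mod_self_left, Nat.mod_eq_of_lt hrm]
    have hinj : ∀ a ∈ Finset.range s, ∀ b ∈ Finset.range s,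
        r + m * a = r + m * b → a = b := by
      intro a _ b _ hab
      have hab' : m * a = m * b := by omega
      exact Nat.eq_of_mul_eq_mul_left hm0 hab'
    rw [himg, Finset.sum_image hinj]
    -- now apply h
    have hik : ∀ t : Fin s, r + m * (t : ℕ) < k := fun t => (hst t).mp t.isLt
    set p : Fin s → ℕ := fun t => n ⟨2 * (r + m * (t : ℕ)), by have := hik t; omega⟩ with hp
    set q : Fin s → ℕ := fun t => n ⟨2 * (r + m * (t : ℕ)) + 1, by have := hik t; omega⟩ with hq
    have hpq : ∀ t, p t < q t := by
      intro t
      apply hn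
      simp [Fin.lt_def]
    have hdisp : ∀ t t' : Fin s, t < t' → q t + d ≤ p t' := by
      intro t t' htt
      have htn : (t : ℕ) < (t' : ℕ) := htt
      have hgap := fin_strictMono_gap n hn
        (2 * (r + m * (t' : ℕ)) - (2 * (r + m * (t : ℕ)) + 1))
        ⟨2 * (r + m * (t : ℕ)) + 1, by have := hik t; omega⟩
        ⟨2 * (r + m * (t' : ℕ)), by have := hik t'; omega⟩
        (by simp; have hmul : m * (t : ℕ) + m ≤ m * (t' : ℕ) := by
              have h' : m * ((t : ℕ) + 1) ≤ m * (t' : ℕ) := Nat.mul_le_mul_left m htn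
              rw [Nat.mul_add, Nat.mul_one] at h'
              exact h'
            omega)
      have hmul : m * (t : ℕ) + m ≤ m * (t' : ℕ) := by
        have h' : m * ((t : ℕ) + 1) ≤ m * (t' : ℕ) := Nat.mul_le_mul_left m htn
        rw [Nat.mul_add, Nat.mul_one] at h'
        exact h'
      simp only [hp, hq]
      have hd2 : 2 * (r + m * (t : ℕ)) + 1 + d ≤ 2 * (r + m * (t' : ℕ)) := by omega
      omega
    have happ := h s p q hpq hdisp
    have hsum : ∑ t ∈ Finset.range s, F (r + m * t) = ∑ j, (x (q j) - x (p j)) ^ 2 := by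
      rw [Finset.sum_range fun t => F (r + m * t)]
      apply Finset.sum_congr rfl
      intro t _
      have := hik t
      simp [hF, hp, hq, this]
    rw [hsum]
    exact happ
  calc ∑ r ∈ Finset.range m, ∑ i ∈ (Finset.range k).filter (fun i => i % m = r), F i
      ≤ ∑ _r ∈ Finset.range m, M := Finset.sum_le_sum hfiber
    _ = (m : ℝ) * M := by simp [mul_comm]
    _ ≤ ((d / 2 + 2 : ℕ) : ℝ) * M := by
        apply mul_le_mul_of_nonneg_right _ hM
        push_cast
        have : m ≤ d / 2 + 2 := by omega
        exact_mod_cast this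
end

section
/- Let d ≥ 1, e = (e_1,...,e_d) ∈ R^d with e_1 ≠ 0 and e_1 + ... + e_d ≠ 0, and let C > 0 be a constant such that for all reals x(1),...,x(d+1) there exist 1 ≤ n(1) < ... < n(d) ≤ d+1 with |∑_{j=1}^d e_j x(n(j))| ≥ C|x(1)|. If x : ℕ → ℝ satisfies: the suprema over all d-sets ω of the (e,ω)-variation of x is finite (i.e. there is M with ∑ blocks (e · x(block))^2 ≤ M for all d-sets), then ∑_{m=1}^∞ x(m)^2 < ∞. -/
theorem lemma10 (d : ℕ) (hd : 1 ≤ d) (e : ℕ → ℝ) (he : e 0 ≠ 0)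
    (hsum : ∑ i ∈ Finset.range d, e i ≠ 0) (C : ℝ) (hCpos : 0 < C)
    (hC : ∀ x : Fin (d + 1) → ℝ, ∃ m : Fin d → Fin (d + 1), StrictMono m ∧
      C * |x 0| ≤ |∑ j : Fin d, e (j : ℕ) * x (m j)|)
    (x : ℕ → ℝ) (M : ℝ)
    (hM : ∀ (k : ℕ) (n : ℕ → ℕ), StrictMono n →
      ∑ i ∈ Finset.range k, (∑ j ∈ Finset.range d, e j * x (n (i * d + j))) ^ 2 ≤ M) :
    Summable fun m => x m ^ 2 := by
  have hdpos : 0 < d := hd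
  have hC2 : (0:ℝ) < C ^ 2 := by positivity
  -- key per-residue bound
  have key : ∀ r k : ℕ, ∑ i ∈ Finset.range k, x (i * (d+1) + r) ^ 2 ≤ M / C ^ 2 := by
    intro r k
    choose σ hσm hσb using fun i : ℕ =>
      hC (fun t : Fin (d+1) => x (i * (d+1) + r + (t : ℕ)))
    set n : ℕ → ℕ := fun p =>
      (p / d) * (d+1) + r + (σ (p / d) ⟨p % d, Nat.mod_lt _ hdpos⟩ : ℕ) with hn
    have hmono : StrictMono n := by
      apply strictMono_nat_of_lt_succ
      intro p
      have hdm := Nat.div_add_mod p d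
      by_cases h : p % d + 1 < d
      · have h12 : (p+1) / d = p / d ∧ (p+1) % d = p % d + 1 :=
          (Nat.div_mod_unique hdpos).mpr ⟨by omega, h⟩
        simp only [hn, h12.1]
        have hlt := hσm (p / d)
          (a := ⟨p % d, Nat.mod_lt _ hdpos⟩) (b := ⟨(p+1) % d, Nat.mod_lt _ hdpos⟩)
          (by simp [Fin.lt_def, h12.2])
        have := Fin.lt_def.mp hlt
        omega
      · have hmul : d * (p / d + 1) = d * (p / d) + d := by ring
        have hplt := Nat.mod_lt p hdpos
        have h12 : (p+1) / d = p / d + 1 ∧ (p+1) % d = 0 :=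
          (Nat.div_mod_unique hdpos).mpr ⟨by omega, hdpos⟩
        simp only [hn, h12.1]
        have b1 : (σ (p / d) ⟨p % d, Nat.mod_lt _ hdpos⟩ : ℕ) < d + 1 := Fin.is_lt _
        have b2 : (0:ℕ) ≤ (σ ((p+1) / d) ⟨(p+1) % d, Nat.mod_lt _ hdpos⟩ : ℕ) := Nat.zero_le _
        nlinarith [Nat.zero_le (p / d)]
    have hMk := hM k n hmono
    have hterm : ∀ i ∈ Finset.range k,
        C ^ 2 * x (i * (d+1) + r) ^ 2 ≤
          (∑ j ∈ Finset.range d, e j * x (n (i * d + j))) ^ 2 := by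
      intro i _
      have hb := hσb i
      simp only [Fin.val_zero, Nat.add_zero] at hb
      have heq : ∑ j ∈ Finset.range d, e j * x (n (i * d + j)) =
          ∑ j : Fin d, e (j : ℕ) * x (i * (d+1) + r + (σ i j : ℕ)) := by
        rw [← Fin.sum_univ_eq_sum_range (fun j => e j * x (n (i * d + j)))]
        apply Finset.sum_congr rfl
        intro j _
        have hdiv : (i * d + (j:ℕ)) / d = i := by
          rw [mul_comm, Nat.mul_add_div hdpos, Nat.div_eq_of_lt j.isLt]; omega
        have hmod : (i * d + (j:ℕ)) % d = (j:ℕ) := by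
          rw [mul_comm, Nat.mul_add_mod, Nat.mod_eq_of_lt j.isLt]
        have hfin : (⟨(i * d + (j:ℕ)) % d, Nat.mod_lt _ hdpos⟩ : Fin d) = j :=
          Fin.ext hmod
        simp only [hn]
        rw [hfin, hdiv]
      rw [heq]
      calc C ^ 2 * x (i * (d+1) + r) ^ 2 = (C * |x (i * (d+1) + r)|) ^ 2 := by
            rw [mul_pow, sq_abs]
        _ ≤ |∑ j : Fin d, e (j : ℕ) * x (i * (d+1) + r + (σ i j : ℕ))| ^ 2 := by
            apply pow_le_pow_left₀ (by positivity) hb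
        _ = (∑ j : Fin d, e (j : ℕ) * x (i * (d+1) + r + (σ i j : ℕ))) ^ 2 := sq_abs _
    have hsum1 : C ^ 2 * ∑ i ∈ Finset.range k, x (i * (d+1) + r) ^ 2 ≤ M := by
      rw [Finset.mul_sum]
      exact le_trans (Finset.sum_le_sum hterm) hMk
    rw [le_div_iff₀ hC2]
    linarith
  -- bounded partial sums
  have bound : ∀ N, ∑ m ∈ Finset.range N, x m ^ 2 ≤ (d+1) * (M / C ^ 2) := by
    intro N
    have hsub : Finset.range N ⊆ (Finset.range (d+1) ×ˢ Finset.range N).image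
        (fun p : ℕ × ℕ => p.2 * (d+1) + p.1) := by
      intro m hm
      simp only [Finset.mem_image, Finset.mem_product, Finset.mem_range] at *
      exact ⟨(m % (d+1), m / (d+1)),
        ⟨Nat.mod_lt _ (by omega), lt_of_le_of_lt (Nat.div_le_self _ _) hm⟩,
        by rw [mul_comm]; exact Nat.div_add_mod m (d+1)⟩
    have hinj : Set.InjOn (fun p : ℕ × ℕ => p.2 * (d+1) + p.1)
        ((Finset.range (d+1) ×ˢ Finset.range N) : Finset (ℕ × ℕ)) := by
      intro p hp q hq hpq
      simp only [Finset.coe_product, Set.mem_prod, Finset.mem_coe,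
        Finset.mem_range] at hp hq
      dsimp only at hpq
      have h1 : (p.2 * (d+1) + p.1) % (d+1) = p.1 := by
        rw [mul_comm, Nat.mul_add_mod, Nat.mod_eq_of_lt hp.1]
      have h2 : (q.2 * (d+1) + q.1) % (d+1) = q.1 := by
        rw [mul_comm, Nat.mul_add_mod, Nat.mod_eq_of_lt hq.1]
      have hfst : p.1 = q.1 := by rw [← h1, ← h2, hpq]
      have hmul : p.2 * (d+1) = q.2 * (d+1) := by omega
      have hsnd : p.2 = q.2 :=
        Nat.eq_of_mul_eq_mul_right (by omega) hmul
      exact Prod.ext hfst hsnd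
    calc ∑ m ∈ Finset.range N, x m ^ 2
        ≤ ∑ m ∈ (Finset.range (d+1) ×ˢ Finset.range N).image
            (fun p : ℕ × ℕ => p.2 * (d+1) + p.1), x m ^ 2 :=
          Finset.sum_le_sum_of_subset_of_nonneg hsub (fun _ _ _ => sq_nonneg _)
      _ = ∑ p ∈ Finset.range (d+1) ×ˢ Finset.range N, x (p.2 * (d+1) + p.1) ^ 2 :=
          Finset.sum_image (fun p hp q hq h => hinj hp hq h)
      _ = ∑ r ∈ Finset.range (d+1), ∑ i ∈ Finset.range N, x (i * (d+1) + r) ^ 2 := by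
          rw [Finset.sum_product]
      _ ≤ ∑ r ∈ Finset.range (d+1), M / C ^ 2 :=
          Finset.sum_le_sum (fun r _ => key r N)
      _ = (d+1) * (M / C ^ 2) := by
          rw [Finset.sum_const, Finset.card_range, nsmul_eq_mul]
          push_cast
          ring
  exact summable_of_sum_range_le (fun n => sq_nonneg _) bound
end

section
/- For every d ≥ 1 and reals e_1,...,e_d with e_1 ≠ 0, the set J(e) of real sequences x tending to 0 with finite e-variation ||x||_e = sup over d-sets ω of the (e,ω)-variation, equipped with ||·||_e, is a normed vector space (in particular ||·||_e is a norm on J(e): it is finite, homogeneous, subadditive, and ||x||_e = 0 implies x = 0). -/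
/-- The set of `(e,ω)`-variations of `x` over all `d`-sets `ω`: a `d`-set is given by
a strictly increasing sequence of naturals split into `k` consecutive blocks of `d`. -/
def eVarSet (d : ℕ) (e x : ℕ → ℝ) : Set ℝ :=
  {r | ∃ (k : ℕ) (n : ℕ → ℕ), StrictMono n ∧
    r = Real.sqrt (∑ i ∈ Finset.range k,
          (∑ j ∈ Finset.range d, e j * x (n (i * d + j))) ^ 2)}

lemma zero_mem_eVarSet (d : ℕ) (e x : ℕ → ℝ) : (0:ℝ) ∈ eVarSet d e x :=
  ⟨0, id, strictMono_id, by simp⟩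

lemma eVarSet_nonneg {d : ℕ} {e x : ℕ → ℝ} {r : ℝ} (h : r ∈ eVarSet d e x) : 0 ≤ r := by
  obtain ⟨k, n, hn, rfl⟩ := h; exact Real.sqrt_nonneg _

lemma eVarSet_smul (d : ℕ) (e x : ℕ → ℝ) (c : ℝ) :
    eVarSet d e (c • x) = (fun r => |c| * r) '' eVarSet d e x := by
  ext r
  constructor
  · rintro ⟨k, n, hn, rfl⟩
    refine ⟨Real.sqrt (∑ i ∈ Finset.range k,
      (∑ j ∈ Finset.range d, e j * x (n (i * d + j))) ^ 2), ⟨k, n, hn, rfl⟩, ?_⟩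
    show |c| * _ = _
    rw [← Real.sqrt_sq_eq_abs, ← Real.sqrt_mul (sq_nonneg c), Finset.mul_sum]
    congr 1
    refine Finset.sum_congr rfl fun i _ => ?_
    rw [← mul_pow, Finset.mul_sum]
    congr 1
    exact Finset.sum_congr rfl fun j _ => by simp [Pi.smul_apply, smul_eq_mul]; ring
  · rintro ⟨s, ⟨k, n, hn, rfl⟩, rfl⟩
    refine ⟨k, n, hn, ?_⟩
    show |c| * _ = _
    rw [← Real.sqrt_sq_eq_abs, ← Real.sqrt_mul (sq_nonneg c), Finset.mul_sum]
    congr 1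
    refine Finset.sum_congr rfl fun i _ => ?_
    rw [← mul_pow, Finset.mul_sum]
    congr 1
    exact Finset.sum_congr rfl fun j _ => by simp [Pi.smul_apply, smul_eq_mul]; ring

lemma sqrt_sum_sq_add_le (k : ℕ) (a b : ℕ → ℝ) :
    Real.sqrt (∑ i ∈ Finset.range k, (a i + b i) ^ 2) ≤
      Real.sqrt (∑ i ∈ Finset.range k, (a i) ^ 2) +
      Real.sqrt (∑ i ∈ Finset.range k, (b i) ^ 2) := by
  let u : EuclideanSpace ℝ (Fin k) := WithLp.toLp 2 (fun i => a i)
  let v : EuclideanSpace ℝ (Fin k) := WithLp.toLp 2 (fun i => b i)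
  have h := norm_add_le u v
  have hn : ∀ (f : ℕ → ℝ) (w : EuclideanSpace ℝ (Fin k)), (∀ i : Fin k, w i = f i) →
      ‖w‖ = Real.sqrt (∑ i ∈ Finset.range k, (f i) ^ 2) := by
    intro f w hw
    rw [EuclideanSpace.norm_eq]
    congr 1
    rw [← Fin.sum_univ_eq_sum_range]
    exact Finset.sum_congr rfl fun i _ => by rw [hw i, Real.norm_eq_abs, sq_abs]
  rw [hn a u (fun i => rfl), hn b v (fun i => rfl)] at h
  calc Real.sqrt (∑ i ∈ Finset.range k, (a i + b i) ^ 2) = ‖u + v‖ := by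
        rw [hn (fun i => a i + b i) (u + v) (fun i => rfl)]
    _ ≤ _ := h

lemma sSup_mul_image (c : ℝ) (hc : 0 ≤ c) (S : Set ℝ) (hS : S.Nonempty) (hb : BddAbove S) :
    sSup ((fun r => c * r) '' S) = c * sSup S := by
  rcases hc.eq_or_lt with rfl | hc
  · simp [Set.Nonempty.image_const hS]
  · apply IsLUB.csSup_eq _ (hS.image _)
    constructor
    · rintro t ⟨s, hs, rfl⟩
      exact mul_le_mul_of_nonneg_left (le_csSup hb hs) hc.le
    · intro b hbu
      have : sSup S ≤ b / c := by
        apply csSup_le hS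
        intro s hs
        rw [le_div_iff₀ hc]
        have h2 : c * s ≤ b := hbu ⟨s, hs, rfl⟩
        linarith [mul_comm c s]
      calc c * sSup S ≤ c * (b / c) := mul_le_mul_of_nonneg_left this hc.le
        _ = b := by field_simp

/-- `J(e)`: sequences tending to zero with finite `e`-variation. -/
def Je (d : ℕ) (e : ℕ → ℝ) : Set (ℕ → ℝ) :=
  {x | Filter.Tendsto x Filter.atTop (nhds 0) ∧ BddAbove (eVarSet d e x)}

/-- The `e`-variation norm. -/
noncomputable def eNorm (d : ℕ) (e x : ℕ → ℝ) : ℝ := sSup (eVarSet d e x)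

lemma eVarSet_add_le {d : ℕ} {e x y : ℕ → ℝ} (hx : BddAbove (eVarSet d e x))
    (hy : BddAbove (eVarSet d e y)) :
    ∀ r ∈ eVarSet d e (x + y), r ≤ eNorm d e x + eNorm d e y := by
  rintro r ⟨k, n, hn, rfl⟩
  set A : ℕ → ℝ := fun i => ∑ j ∈ Finset.range d, e j * x (n (i * d + j)) with hA
  set B : ℕ → ℝ := fun i => ∑ j ∈ Finset.range d, e j * y (n (i * d + j)) with hB
  have hsplit : ∀ i, (∑ j ∈ Finset.range d, e j * (x + y) (n (i * d + j))) = A i + B i := by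
    intro i
    rw [hA, hB, ← Finset.sum_add_distrib]
    exact Finset.sum_congr rfl fun j _ => by simp [Pi.add_apply]; ring
  calc Real.sqrt (∑ i ∈ Finset.range k,
        (∑ j ∈ Finset.range d, e j * (x + y) (n (i * d + j))) ^ 2)
      = Real.sqrt (∑ i ∈ Finset.range k, (A i + B i) ^ 2) := by
        congr 1; exact Finset.sum_congr rfl fun i _ => by rw [hsplit]
    _ ≤ Real.sqrt (∑ i ∈ Finset.range k, (A i) ^ 2) +
        Real.sqrt (∑ i ∈ Finset.range k, (B i) ^ 2) := sqrt_sum_sq_add_le k A B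
    _ ≤ eNorm d e x + eNorm d e y :=
        add_le_add (le_csSup hx ⟨k, n, hn, rfl⟩) (le_csSup hy ⟨k, n, hn, rfl⟩)

/-- Proposition 4: `(J(e), ‖·‖ₑ)` is a normed vector space. -/
theorem Je_normed (d : ℕ) (hd : 1 ≤ d) (e : ℕ → ℝ) (he : e 0 ≠ 0) :
    (∀ x ∈ Je d e, ∀ y ∈ Je d e, x + y ∈ Je d e) ∧
    (∀ (c : ℝ), ∀ x ∈ Je d e, c • x ∈ Je d e) ∧
    (∀ x ∈ Je d e, 0 ≤ eNorm d e x) ∧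
    (∀ (c : ℝ), ∀ x ∈ Je d e, eNorm d e (c • x) = |c| * eNorm d e x) ∧
    (∀ x ∈ Je d e, ∀ y ∈ Je d e, eNorm d e (x + y) ≤ eNorm d e x + eNorm d e y) ∧
    (∀ x ∈ Je d e, eNorm d e x = 0 → x = 0) := by
  refine ⟨?_, ?_, ?_, ?_, ?_, ?_⟩
  · rintro x ⟨hx0, hxb⟩ y ⟨hy0, hyb⟩
    refine ⟨by have h := hx0.add hy0; rw [add_zero] at h; exact h, ⟨eNorm d e x + eNorm d e y, fun r hr => eVarSet_add_le hxb hyb r hr⟩⟩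
  · rintro c x ⟨hx0, hxb⟩
    constructor
    · have : Filter.Tendsto (fun m => c * x m) Filter.atTop (nhds (c * 0)) := hx0.const_mul c
      rw [mul_zero] at this; exact this
    · rw [eVarSet_smul]
      exact Monotone.map_bddAbove
        (f := fun r => |c| * r)
        (fun a b hab => mul_le_mul_of_nonneg_left hab (abs_nonneg c)) hxb
  · rintro x ⟨hx0, hxb⟩
    exact le_csSup hxb (zero_mem_eVarSet d e x)
  · rintro c x ⟨hx0, hxb⟩
    rw [eNorm, eVarSet_smul]
    exact sSup_mul_image |c| (abs_nonneg c) _ ⟨0, zero_mem_eVarSet d e x⟩ hxb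
  · rintro x ⟨hx0, hxb⟩ y ⟨hy0, hyb⟩
    exact csSup_le ⟨0, zero_mem_eVarSet d e _⟩ (eVarSet_add_le hxb hyb)
  · rintro x ⟨hx0, hxb⟩ hnorm
    have hall : ∀ r ∈ eVarSet d e x, r = 0 := fun r hr =>
      le_antisymm (hnorm ▸ le_csSup hxb hr) (eVarSet_nonneg hr)
    funext m
    obtain ⟨d', rfl⟩ : ∃ d', d = d' + 1 := ⟨d - 1, (Nat.succ_pred_eq_of_pos hd).symm⟩
    -- the key sums vanish
    have hS : ∀ t : ℕ, 1 ≤ t → (∑ j ∈ Finset.range (d' + 1), e j * x (m + j * t)) = 0 := by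
      intro t ht
      set S := ∑ j ∈ Finset.range (d' + 1), e j * x (m + j * t) with hSdef
      have hmem : Real.sqrt (S ^ 2) ∈ eVarSet (d' + 1) e x := by
        refine ⟨1, fun j => m + j * t, ?_, ?_⟩
        · intro a b hab
          exact Nat.add_lt_add_left (Nat.mul_lt_mul_of_lt_of_le hab le_rfl ht) m
        · simp [hSdef]
      have := hall _ hmem
      rw [Real.sqrt_sq_eq_abs] at this
      exact abs_eq_zero.mp this
    -- take the limit t → ∞
    have htail : Filter.Tendsto (fun t : ℕ => ∑ j ∈ Finset.range d', e (j + 1) * x (m + (j + 1) * t))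
        Filter.atTop (nhds 0) := by
      have : Filter.Tendsto (fun t : ℕ => ∑ j ∈ Finset.range d', e (j + 1) * x (m + (j + 1) * t))
          Filter.atTop (nhds (∑ j ∈ Finset.range d', e (j + 1) * 0)) := by
        refine tendsto_finset_sum _ fun j _ => Filter.Tendsto.const_mul _ ?_
        refine hx0.comp (Filter.tendsto_atTop_mono (f := id) (fun t => ?_) Filter.tendsto_id)
        calc (t : ℕ) = 1 * t := (one_mul t).symm
          _ ≤ (j + 1) * t := Nat.mul_le_mul_right t (Nat.succ_le_succ (Nat.zero_le j))
          _ ≤ m + (j + 1) * t := Nat.le_add_left _ m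
      simpa using this
    have hfull : Filter.Tendsto (fun t : ℕ => ∑ j ∈ Finset.range (d' + 1), e j * x (m + j * t))
        Filter.atTop (nhds (e 0 * x m)) := by
      have heq : ∀ t : ℕ, (∑ j ∈ Finset.range (d' + 1), e j * x (m + j * t)) =
          (∑ j ∈ Finset.range d', e (j + 1) * x (m + (j + 1) * t)) + e 0 * x m := by
        intro t
        rw [Finset.sum_range_succ']
        simp
      simp_rw [heq]
      simpa using htail.add (tendsto_const_nhds (x := e 0 * x m))
    have hzero : Filter.Tendsto (fun t : ℕ => ∑ j ∈ Finset.range (d' + 1), e j * x (m + j * t))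
        Filter.atTop (nhds 0) := by
      apply Filter.Tendsto.congr' _ tendsto_const_nhds
      filter_upwards [Filter.eventually_ge_atTop 1] with t ht
      exact (hS t ht).symm
    have := tendsto_nhds_unique hfull hzero
    have hx0' : x m = 0 := by
      rcases mul_eq_zero.mp this with h | h
      · exact absurd h he
      · exact h
    simpa using hx0'
end
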